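/- Let θ̂_u and θ̂_b be square-integrable real-valued random variables on a probability space with E[θ̂_u] = θ₀, Var(θ̂_u) = σ_u² > 0, Var(θ̂_b) = σ_b², Cov(θ̂_u, θ̂_b) = σ_bu, and σ_u² + σ_b² − 2σ_bu > 0. Define λ̂ = (σ_u² − σ_bu)/((θ̂_u − θ̂_b)² + σ_u² + σ_b² − 2σ_bu) and θ̂_λ̂ = λ̂·θ̂_b + (1 − λ̂)·θ̂_u. Let c = σ_b/σ_u and let ρ = σ_bu/(σ_u·σ_b) if σ_b > 0 and ρ = 0 if σ_b = 0. Then E[(θ̂_λ̂ − θ₀)²] ≤ σ_u²·(1 + (1/2)·|1 − ρc|/√(1 − 2ρc + c²))². -/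

import Mathlib

open MeasureTheory ProbabilityTheory Filter

/-- Bound on the MSE of the combination estimator (known variances/covariance):
`E[(θ̂_λ̂ − θ₀)²] ≤ σ_u²·(1 + (1/2)·|1 − ρc|/√(1 − 2ρc + c²))²`. -/
theorem mse_bound_cov
    {Ω : Type*} [MeasurableSpace Ω] (P : Measure Ω) [IsProbabilityMeasure P]
    (θu θb : Ω → ℝ) (θ₀ σu2 σb2 σbu c ρ : ℝ)
    (hθu : MemLp θu 2 P) (hθb : MemLp θb 2 P)
    (hEu : ∫ ω, θu ω ∂P = θ₀)
    (hVu : variance θu P = σu2) (hσu2pos : 0 < σu2)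
    (hVb : variance θb P = σb2)
    (hCov : ∫ ω, (θu ω - θ₀) * (θb ω - ∫ x, θb x ∂P) ∂P = σbu)
    (hv : σu2 + σb2 - 2 * σbu > 0)
    (hc : c = Real.sqrt σb2 / Real.sqrt σu2)
    (hρ : ρ = if σb2 = 0 then 0 else σbu / (Real.sqrt σu2 * Real.sqrt σb2)) :
    ∫ ω, (((σu2 - σbu) / ((θu ω - θb ω) ^ 2 + σu2 + σb2 - 2 * σbu)) * θb ω
        + (1 - (σu2 - σbu) / ((θu ω - θb ω) ^ 2 + σu2 + σb2 - 2 * σbu)) * θu ω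
        - θ₀) ^ 2 ∂P
      ≤ σu2 * (1 + (1 / 2) * |1 - ρ * c| / Real.sqrt (1 - 2 * ρ * c + c ^ 2)) ^ 2 := by
  have hσb2 : 0 ≤ σb2 := hVb ▸ variance_nonneg θb P
  set vv : ℝ := σu2 + σb2 - 2 * σbu with hvv_def
  have hvpos : (0:ℝ) < vv := hv
  have hsv : 0 < Real.sqrt vv := Real.sqrt_pos.mpr hvpos
  have hsu : 0 < Real.sqrt σu2 := Real.sqrt_pos.mpr hσu2pos
  set M : ℝ := |σu2 - σbu| / (2 * Real.sqrt vv) with hM_def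
  have hMnn : 0 ≤ M := div_nonneg (abs_nonneg _) (by positivity)
  set f : Ω → ℝ := fun ω => θu ω - θ₀ with hf_def
  set g : Ω → ℝ := fun ω =>
    (σu2 - σbu) * (θu ω - θb ω) / ((θu ω - θb ω) ^ 2 + σu2 + σb2 - 2 * σbu) with hg_def
  -- pointwise rewrite
  have hden : ∀ ω : Ω, (0:ℝ) < (θu ω - θb ω) ^ 2 + σu2 + σb2 - 2 * σbu := by
    intro ω
    have := sq_nonneg (θu ω - θb ω)
    nlinarith [hvpos]
  have hrw : ∀ ω : Ω, (((σu2 - σbu) / ((θu ω - θb ω) ^ 2 + σu2 + σb2 - 2 * σbu)) * θb ω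
        + (1 - (σu2 - σbu) / ((θu ω - θb ω) ^ 2 + σu2 + σb2 - 2 * σbu)) * θu ω - θ₀)
      = f ω - g ω := by
    intro ω
    have h0 := (hden ω).ne'
    simp only [hf_def, hg_def]
    field_simp
    ring
  -- bound on g
  have hgbd : ∀ ω : Ω, |g ω| ≤ M := by
    intro ω
    set d := θu ω - θb ω with hd_def
    have hD : (0:ℝ) < d ^ 2 + σu2 + σb2 - 2 * σbu := hden ω
    have h2 : 2 * |d| * Real.sqrt vv ≤ d ^ 2 + σu2 + σb2 - 2 * σbu := by
      have := sq_nonneg (|d| - Real.sqrt vv)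
      have hsq : Real.sqrt vv ^ 2 = vv := Real.sq_sqrt hvpos.le
      have : 2 * |d| * Real.sqrt vv ≤ |d| ^ 2 + vv := by nlinarith
      have habs : |d| ^ 2 = d ^ 2 := sq_abs d
      nlinarith
    have : |g ω| = |σu2 - σbu| * |d| / (d ^ 2 + σu2 + σb2 - 2 * σbu) := by
      rw [hg_def]
      rw [abs_div, abs_mul, abs_of_pos hD]
    rw [this, hM_def]
    rw [div_le_div_iff₀ hD (by positivity)]
    calc |σu2 - σbu| * |d| * (2 * Real.sqrt vv)
        = |σu2 - σbu| * (2 * |d| * Real.sqrt vv) := by ring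
      _ ≤ |σu2 - σbu| * (d ^ 2 + σu2 + σb2 - 2 * σbu) :=
          mul_le_mul_of_nonneg_left h2 (abs_nonneg _)
  -- membership / integrability
  have hfmem : MemLp f 2 P := hθu.sub (memLp_const θ₀)
  have hdmeas : AEStronglyMeasurable (fun ω => θu ω - θb ω) P := hθu.1.sub hθb.1
  have hgmeas : AEStronglyMeasurable g P := by
    have h1 : AEStronglyMeasurable (fun ω => (σu2 - σbu) * (θu ω - θb ω)) P :=
      aestronglyMeasurable_const.mul hdmeas
    have h2 : AEStronglyMeasurable
        (fun ω => (θu ω - θb ω) ^ 2 + σu2 + σb2 - 2 * σbu) P := by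
      have h3 : AEStronglyMeasurable
          (fun ω => (θu ω - θb ω) * (θu ω - θb ω) + σu2 + σb2 - 2 * σbu) P :=
        (((hdmeas.mul hdmeas).add aestronglyMeasurable_const).add
          aestronglyMeasurable_const).sub aestronglyMeasurable_const
      exact h3.congr (Filter.Eventually.of_forall fun ω => by ring)
    exact (h1.aemeasurable.div h2.aemeasurable).aestronglyMeasurable
  have hgmem : MemLp g 2 P :=
    MemLp.of_bound hgmeas M (Filter.Eventually.of_forall fun ω => by
      rw [Real.norm_eq_abs]; exact hgbd ω)
  have hfg : MemLp (f - g) 2 P := hfmem.sub hgmem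
  have hint1 : Integrable (fun ω => (f ω - g ω) ^ 2) P := by
    have := hfg.integrable_sq
    simpa using this
  have hintf2 : Integrable (fun ω => f ω ^ 2) P := by
    have := hfmem.integrable_sq
    simpa using this
  have hintfabs : Integrable (fun ω => |f ω|) P := (hfmem.integrable one_le_two).abs
  have hint2 : Integrable (fun ω => f ω ^ 2 + 2 * M * |f ω| + M ^ 2) P :=
    (hintf2.add (hintfabs.const_mul (2 * M))).add (integrable_const _)
  -- pointwise inequality
  have hpt : ∀ ω : Ω, (f ω - g ω) ^ 2 ≤ f ω ^ 2 + 2 * M * |f ω| + M ^ 2 := by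
    intro ω
    have h1 : |g ω| ≤ M := hgbd ω
    have h2 : -(f ω * g ω) ≤ |f ω| * M := by
      calc -(f ω * g ω) ≤ |f ω * g ω| := neg_le_abs _
        _ = |f ω| * |g ω| := abs_mul _ _
        _ ≤ |f ω| * M := mul_le_mul_of_nonneg_left h1 (abs_nonneg _)
    have h3 : g ω ^ 2 ≤ M ^ 2 := by
      rw [← sq_abs]
      exact pow_le_pow_left₀ (abs_nonneg _) h1 2
    nlinarith [sq_abs (f ω)]
  -- main integral inequality
  have hmain : ∫ ω, (((σu2 - σbu) / ((θu ω - θb ω) ^ 2 + σu2 + σb2 - 2 * σbu)) * θb ω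
        + (1 - (σu2 - σbu) / ((θu ω - θb ω) ^ 2 + σu2 + σb2 - 2 * σbu)) * θu ω
        - θ₀) ^ 2 ∂P ≤ σu2 + 2 * M * Real.sqrt σu2 + M ^ 2 := by
    have heq : ∫ ω, (((σu2 - σbu) / ((θu ω - θb ω) ^ 2 + σu2 + σb2 - 2 * σbu)) * θb ω
        + (1 - (σu2 - σbu) / ((θu ω - θb ω) ^ 2 + σu2 + σb2 - 2 * σbu)) * θu ω
        - θ₀) ^ 2 ∂P = ∫ ω, (f ω - g ω) ^ 2 ∂P := by
      apply integral_congr_ae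
      filter_upwards with ω
      rw [hrw ω]
    rw [heq]
    have step1 : ∫ ω, (f ω - g ω) ^ 2 ∂P ≤ ∫ ω, (f ω ^ 2 + 2 * M * |f ω| + M ^ 2) ∂P :=
      integral_mono hint1 hint2 hpt
    have hEf2 : ∫ ω, f ω ^ 2 ∂P = σu2 := by
      have hv2 : variance θu P = ∫ ω, ((θu - fun _ => ∫ x, θu x ∂P) ^ 2 : Ω → ℝ) ω ∂P := variance_eq_integral hθu.1.aemeasurable
      rw [hVu, hEu] at hv2
      simp only [Pi.pow_apply, Pi.sub_apply] at hv2
      simp only [hf_def]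
      exact hv2.symm
    have hIabs : ∫ ω, |f ω| ∂P ≤ Real.sqrt σu2 := by
      have habs2 : MemLp (fun ω => |f ω|) 2 P := by
        have := hfmem.norm
        simpa [Real.norm_eq_abs] using this
      have hvd := variance_eq_sub habs2
      have hvnn := variance_nonneg (fun ω => |f ω|) P
      have hsq : ∫ ω, |f ω| ^ 2 ∂P = σu2 := by
        rw [← hEf2]
        apply integral_congr_ae
        filter_upwards with ω
        exact sq_abs _
      have hI2 : (∫ ω, |f ω| ∂P) ^ 2 ≤ σu2 := by
        have : (0:ℝ) ≤ (∫ ω, ((fun ω => |f ω|) ^ 2) ω ∂P) - (∫ ω, |f ω| ∂P) ^ 2 := by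
          rw [← hvd]; exact hvnn
        have hsq' : (∫ ω, ((fun ω => |f ω|) ^ 2) ω ∂P) = σu2 := by
          simpa using hsq
        linarith [hsq' ▸ this]
      have hInn : 0 ≤ ∫ ω, |f ω| ∂P := integral_nonneg fun ω => abs_nonneg _
      exact (Real.le_sqrt hInn hσu2pos.le).mpr hI2
    have step2 : ∫ ω, (f ω ^ 2 + 2 * M * |f ω| + M ^ 2) ∂P
        = σu2 + 2 * M * (∫ ω, |f ω| ∂P) + M ^ 2 := by
      have hA : Integrable (fun ω => f ω ^ 2 + 2 * M * |f ω|) P :=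
        hintf2.add (hintfabs.const_mul (2 * M))
      rw [integral_add hA (integrable_const _),
        integral_add hintf2 (hintfabs.const_mul (2 * M)), integral_const,
        integral_const_mul, hEf2]
      simp
    have step3 : σu2 + 2 * M * (∫ ω, |f ω| ∂P) + M ^ 2
        ≤ σu2 + 2 * M * Real.sqrt σu2 + M ^ 2 := by
      nlinarith [hIabs, hMnn]
    linarith [step1, step2 ▸ step1]
  -- identify the RHS
  have hsusq : Real.sqrt σu2 ^ 2 = σu2 := Real.sq_sqrt hσu2pos.le
  have hvsq : Real.sqrt vv ^ 2 = vv := Real.sq_sqrt hvpos.le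
  have hRHS : σu2 * (1 + (1 / 2) * |1 - ρ * c| / Real.sqrt (1 - 2 * ρ * c + c ^ 2)) ^ 2
      = (Real.sqrt σu2 + M) ^ 2 := by
    by_cases hb0 : σb2 = 0
    · -- then σbu = 0
      have hσbu0 : σbu = 0 := by
        have hm : θb =ᵐ[P] fun _ => ∫ x, θb x ∂P := by
          have hveq : variance θb P = ∫ ω, ((θb - fun _ => ∫ x, θb x ∂P) ^ 2 : Ω → ℝ) ω ∂P := variance_eq_integral hθb.1.aemeasurable
          rw [hVb, hb0] at hveq
          have hint : Integrable (fun ω => (θb ω - ∫ x, θb x ∂P) ^ 2) P := by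
            have := (hθb.sub (memLp_const (∫ x, θb x ∂P))).integrable_sq
            simpa using this
          simp only [Pi.pow_apply, Pi.sub_apply] at hveq
          have h0 : ∫ ω, (θb ω - ∫ x, θb x ∂P) ^ 2 ∂P = 0 := hveq.symm
          have := (integral_eq_zero_iff_of_nonneg
            (fun ω => sq_nonneg _) hint).mp h0
          filter_upwards [this] with ω hω
          have : (θb ω - ∫ x, θb x ∂P) ^ 2 = 0 := hω
          have := pow_eq_zero_iff (n := 2) (by norm_num) |>.mp this
          linarith
        rw [← hCov]
        have : ∫ ω, (θu ω - θ₀) * (θb ω - ∫ x, θb x ∂P) ∂P = ∫ (_ : Ω), (0:ℝ) ∂P := by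
          apply integral_congr_ae
          filter_upwards [hm] with ω hω
          rw [hω]; ring
        rw [this, integral_zero]
      have hc0 : c = 0 := by rw [hc, hb0, Real.sqrt_zero, zero_div]
      have hρ0 : ρ = 0 := by rw [hρ, if_pos hb0]
      have hvv : vv = σu2 := by rw [hvv_def, hb0, hσbu0]; ring
      have hM' : M = Real.sqrt σu2 / 2 := by
        rw [hM_def, hσbu0, hvv, sub_zero, abs_of_pos hσu2pos,
          div_eq_div_iff (by positivity) (by norm_num : (2:ℝ) ≠ 0)]
        linear_combination (-2 : ℝ) * hsusq
      rw [hρ0, hc0, hM']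
      rw [show (1 : ℝ) - 2 * 0 * 0 + 0 ^ 2 = 1 by norm_num, Real.sqrt_one,
        show |(1:ℝ) - 0 * 0| = 1 by norm_num]
      linear_combination (-9/4 : ℝ) * hsusq
    · have hb2pos : 0 < σb2 := lt_of_le_of_ne hσb2 (Ne.symm hb0)
      have hsb : 0 < Real.sqrt σb2 := Real.sqrt_pos.mpr hb2pos
      have hsbsq : Real.sqrt σb2 ^ 2 = σb2 := Real.sq_sqrt hb2pos.le
      have hρc : ρ * c = σbu / σu2 := by
        rw [hρ, if_neg hb0, hc, div_mul_div_comm,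
          show Real.sqrt σu2 * Real.sqrt σb2 * Real.sqrt σu2 = σu2 * Real.sqrt σb2 by
            rw [mul_comm (Real.sqrt σu2) (Real.sqrt σb2), mul_assoc,
              Real.mul_self_sqrt hσu2pos.le, mul_comm],
          mul_comm σu2 (Real.sqrt σb2), mul_comm σbu (Real.sqrt σb2),
          mul_div_mul_left _ _ hsb.ne']
      have habs : |1 - ρ * c| = |σu2 - σbu| / σu2 := by
        rw [hρc, show (1 : ℝ) - σbu / σu2 = (σu2 - σbu) / σu2 by field_simp,
          abs_div, abs_of_pos hσu2pos]
      have hsq2 : 1 - 2 * (ρ * c) + c ^ 2 = vv / σu2 := by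
        rw [hρc, hc, div_pow, hsbsq, hsusq, hvv_def]
        field_simp
        ring
      have hsqrt2 : Real.sqrt (1 - 2 * ρ * c + c ^ 2) = Real.sqrt vv / Real.sqrt σu2 := by
        rw [show 1 - 2 * ρ * c + c ^ 2 = 1 - 2 * (ρ * c) + c ^ 2 by ring, hsq2,
          Real.sqrt_div hvpos.le, ]
      have hX : (1 / 2) * |1 - ρ * c| / Real.sqrt (1 - 2 * ρ * c + c ^ 2)
          = M / Real.sqrt σu2 := by
        rw [habs, hsqrt2, hM_def]
        set A := |σu2 - σbu| with hA
        set s := Real.sqrt σu2 with hs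
        set t := Real.sqrt vv with ht
        rw [← hsusq]
        have hs0 : s ≠ 0 := hsu.ne'
        have ht0 : t ≠ 0 := hsv.ne'
        field_simp
      rw [hX, show (1 : ℝ) + M / Real.sqrt σu2 = (Real.sqrt σu2 + M) / Real.sqrt σu2 by
        rw [add_div, div_self hsu.ne'], div_pow, hsusq, ← mul_div_assoc]
      exact mul_div_cancel_left₀ _ hσu2pos.ne' ▸ rfl
  rw [hRHS]
  calc _ ≤ σu2 + 2 * M * Real.sqrt σu2 + M ^ 2 := hmain
    _ = (Real.sqrt σu2 + M) ^ 2 := by linear_combination (-1 : ℝ) * hsusq
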